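/- arXiv:2404.02521 — 2 statements merged into one kernel-verified Lean document; each statement's English description precedes it below -/
import Mathlib

section
/- Let σ₁ > 0, σ₂ > 0, r ∈ ℝ, c ∈ ℝ, S₁ > 0, S₂ > 0 and ρ ∈ (−1, 1). For x > 0, y > 0, τ > 0 define d_x(x, τ) = (ln(x/S₁) + (r − σ₁²/2)τ)/(σ₁√τ), d_y(y, τ) = (ln(y/S₂) + (r − σ₂²/2)τ)/(σ₂√τ), and u(x, y, τ) = c·e^{−rτ}·B(d_x(x, τ), d_y(y, τ); ρ), where B is the bivariate cumulative normal distribution function with correlation ρ. Then u satisfies the transformed two-asset Black-Scholes equation: for all x > 0, y > 0, τ > 0, ∂u/∂τ − (1/2)σ₁²x² ∂²u/∂x² − (1/2)σ₂²y² ∂²u/∂y² − ρσ₁σ₂xy ∂²u/∂x∂y − rx ∂u/∂x − ry ∂u/∂y + ru = 0. -/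
open MeasureTheory Set Real

noncomputable def bsGauss (t : ℝ) : ℝ := Real.exp (-t^2/2)

lemma bsGauss_pos (t : ℝ) : 0 < bsGauss t := Real.exp_pos _

lemma bsGauss_le_one (t : ℝ) : bsGauss t ≤ 1 := by
  rw [bsGauss, ← Real.exp_zero]
  apply Real.exp_le_exp.2
  nlinarith [sq_nonneg t]

lemma continuous_bsGauss : Continuous bsGauss := by
  unfold bsGauss; fun_prop

lemma integrable_bsGauss : Integrable bsGauss := by
  have : bsGauss = fun t : ℝ => Real.exp (-(1/2 : ℝ) * t ^ 2) := by
    funext t; rw [bsGauss]; ring_nf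
  rw [this]
  exact integrable_exp_neg_mul_sq (by norm_num)

lemma hasDerivAt_bsGauss (t : ℝ) : HasDerivAt bsGauss (-t * bsGauss t) t := by
  have h : HasDerivAt (fun t : ℝ => -t^2/2) (-t) t := by
    have := ((hasDerivAt_pow 2 t).neg).div_const 2
    simpa using this.congr_deriv (by ring)
  have H := (Real.hasDerivAt_exp (-t^2/2)).comp t h
  exact H.congr_deriv (by rw [bsGauss]; ring)

noncomputable def bsN (d : ℝ) : ℝ := ∫ t in Set.Iio d, bsGauss t

lemma bsN_nonneg (d : ℝ) : 0 ≤ bsN d :=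
  setIntegral_nonneg measurableSet_Iio fun t _ => (bsGauss_pos t).le

noncomputable def bsC : ℝ := ∫ t, bsGauss t

lemma bsN_le (d : ℝ) : bsN d ≤ bsC :=
  setIntegral_le_integral integrable_bsGauss (Filter.Eventually.of_forall fun t => (bsGauss_pos t).le)

lemma bsN_eq (d : ℝ) : bsN d = bsN 0 + ∫ t in (0:ℝ)..d, bsGauss t := by
  have h0 : ∀ e : ℝ, bsN e = ∫ t in Set.Iic e, bsGauss t := fun e =>
    setIntegral_congr_set Iio_ae_eq_Iic
  rw [h0, h0, ← intervalIntegral.integral_Iic_sub_Iic integrable_bsGauss.integrableOn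
    integrable_bsGauss.integrableOn]
  ring

lemma hasDerivAt_bsN (d : ℝ) : HasDerivAt bsN (bsGauss d) d := by
  have : HasDerivAt (fun a => bsN 0 + ∫ t in (0:ℝ)..a, bsGauss t) (bsGauss d) d := by
    refine HasDerivAt.const_add _ ?_
    exact intervalIntegral.integral_hasDerivAt_right
      integrable_bsGauss.intervalIntegrable
      continuous_bsGauss.aestronglyMeasurable.stronglyMeasurableAtFilter
      continuous_bsGauss.continuousAt
  exact this.congr_of_eventuallyEq (Filter.Eventually.of_forall fun a => (bsN_eq a))

lemma continuous_bsN : Continuous bsN :=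
  continuous_iff_continuousAt.2 fun d => (hasDerivAt_bsN d).continuousAt

lemma image_affine_Iio (σ μ c : ℝ) (hσ : 0 < σ) :
    (fun t : ℝ => σ * t + μ) '' Set.Iio c = Set.Iio (σ * c + μ) := by
  ext z
  constructor
  · rintro ⟨t, ht, rfl⟩
    have := mul_lt_mul_of_pos_left ht hσ
    simpa using by linarith
  · intro hz
    refine ⟨(z - μ) / σ, ?_, by field_simp; ring⟩
    rw [Set.mem_Iio, div_lt_iff₀ hσ]
    simp only [Set.mem_Iio] at hz
    linarith

lemma integral_Iio_bsGauss_affine {σ : ℝ} (hσ : 0 < σ) (μ b : ℝ) :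
    ∫ z in Set.Iio b, bsGauss ((z - μ)/σ) = σ * bsN ((b - μ)/σ) := by
  have himg : Set.Iio b = (fun t : ℝ => σ * t + μ) '' Set.Iio ((b - μ)/σ) := by
    rw [image_affine_Iio _ _ _ hσ]
    congr 1
    field_simp
    ring
  have hf : ∀ t : ℝ, HasDerivAt (fun t : ℝ => σ * t + μ) σ t := fun t => by
    simpa using ((hasDerivAt_id t).const_mul σ).add_const μ
  rw [himg, integral_image_eq_integral_abs_deriv_smul measurableSet_Iio
    (fun t _ => (hf t).hasDerivWithinAt)
    (fun t1 _ t2 _ h => mul_left_cancel₀ hσ.ne' (by linarith : σ * t1 = σ * t2)) (fun z => bsGauss ((z - μ)/σ))]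
  rw [bsN, ← integral_const_mul]
  congr 1
  funext t
  rw [smul_eq_mul, abs_of_pos hσ]
  have : (σ * t + μ - μ)/σ = t := by field_simp; ring
  rw [this]

section Corr

variable {ρ s : ℝ} (hρ : ρ ^ 2 < 1) (hs : s = Real.sqrt (1 - ρ ^ 2))

include hρ hs

lemma bs_s_pos : 0 < s := by
  rw [hs]; exact Real.sqrt_pos.2 (by nlinarith)

lemma bs_s_sq : s ^ 2 = 1 - ρ ^ 2 := by
  rw [hs, Real.sq_sqrt (by nlinarith : (0:ℝ) ≤ 1 - ρ ^ 2)]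

lemma bsE_eq (x z : ℝ) :
    Real.exp (-(x ^ 2 - 2 * ρ * x * z + z ^ 2) / (2 * (1 - ρ ^ 2))) =
      bsGauss x * bsGauss ((z - ρ * x) / s) := by
  have h1 : (0:ℝ) < 1 - ρ ^ 2 := by nlinarith
  have h2 : s ^ 2 = 1 - ρ ^ 2 := bs_s_sq hρ hs
  have h3 : s ≠ 0 := (bs_s_pos hρ hs).ne'
  rw [bsGauss, bsGauss, ← Real.exp_add]
  congr 1
  rw [div_pow, h2]
  field_simp
  ring

lemma bsKswap (x z : ℝ) :
    bsGauss x * bsGauss ((z - ρ * x) / s) = bsGauss z * bsGauss ((x - ρ * z) / s) := by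
  rw [← bsE_eq hρ hs, ← bsE_eq hρ hs]
  ring_nf

lemma integral_Iio_gaussmul (a b : ℝ) :
    ∫ ξ in Set.Iio a, bsGauss ξ * bsGauss ((b - ρ * ξ) / s) =
      bsGauss b * (s * bsN ((a - ρ * b) / s)) := by
  have h3 : 0 < s := bs_s_pos hρ hs
  calc ∫ ξ in Set.Iio a, bsGauss ξ * bsGauss ((b - ρ * ξ) / s)
      = ∫ ξ in Set.Iio a, bsGauss b * bsGauss ((ξ - ρ * b) / s) := by
        apply setIntegral_congr_fun measurableSet_Iio
        intro ξ _
        exact bsKswap hρ hs ξ b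
    _ = bsGauss b * ∫ ξ in Set.Iio a, bsGauss ((ξ - ρ * b) / s) := integral_const_mul _ _
    _ = bsGauss b * (s * bsN ((a - ρ * b) / s)) := by
      rw [integral_Iio_bsGauss_affine h3]

end Corr

lemma integral_Iio_translate (a : ℝ) (f : ℝ → ℝ) :
    ∫ ξ in Set.Iio a, f ξ = ∫ w in Set.Iio (0:ℝ), f (a + w) := by
  have h := (measurePreserving_add_right (volume : Measure ℝ) a).setIntegral_preimage_emb
    (measurableEmbedding_addRight a) f (Set.Iio a)
  have hpre : (· + a) ⁻¹' Set.Iio a = Set.Iio (0:ℝ) := by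
    ext w; simp [Set.mem_Iio]
  rw [hpre] at h
  rw [← h]
  congr 1
  funext w
  rw [add_comm]

noncomputable def bsK (ρ s z b : ℝ) : ℝ := bsGauss z * bsN ((b - ρ * z) / s)
noncomputable def bsQ (ρ s a b : ℝ) : ℝ := ∫ ξ in Set.Iio a, bsK ρ s ξ b
noncomputable def bsQy (ρ s a b : ℝ) : ℝ := bsGauss b * bsN ((a - ρ * b) / s)
noncomputable def bsQxy (ρ s a b : ℝ) : ℝ := bsGauss b * bsGauss ((a - ρ * b) / s) / s

lemma bsC_nonneg : 0 ≤ bsC := integral_nonneg fun t => (bsGauss_pos t).le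

lemma bsGauss_add_le {M z : ℝ} (hz : |z| ≤ M) (w : ℝ) :
    bsGauss (z + w) ≤ Real.exp (M ^ 2 / 2) * Real.exp (-w ^ 2 / 4) := by
  have hz2 : z ^ 2 ≤ M ^ 2 := by
    have := abs_le.1 hz
    nlinarith [this.1, this.2]
  rw [bsGauss, ← Real.exp_add]
  apply Real.exp_le_exp.2
  nlinarith [sq_nonneg (2 * z + w)]

lemma bs_integrable_bound (c₁ c₂ : ℝ) :
    Integrable (fun w : ℝ => (c₁ + c₂ * |w|) * Real.exp (-w ^ 2 / 4)) := by
  have h1 : Integrable (fun w : ℝ => Real.exp (-(1/4 : ℝ) * w ^ 2)) :=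
    integrable_exp_neg_mul_sq (by norm_num)
  have h2 : Integrable (fun w : ℝ => |w * Real.exp (-(1/4 : ℝ) * w ^ 2)|) :=
    (integrable_rpow_mul_exp_neg_mul_sq (by norm_num : (0:ℝ) < 1/4)
      (by norm_num : (-1:ℝ) < 1)).abs.congr
      (Filter.Eventually.of_forall fun w => by simp)
  have h2' : Integrable (fun w : ℝ => |w| * Real.exp (-(1/4 : ℝ) * w ^ 2)) :=
    h2.congr (Filter.Eventually.of_forall fun w => by
      simp [abs_mul, abs_of_pos (Real.exp_pos _)])
  have := (h1.const_mul c₁).add (h2'.const_mul c₂)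
  refine this.congr (Filter.Eventually.of_forall fun w => ?_)
  show c₁ * Real.exp (-(1/4 : ℝ) * w ^ 2) + c₂ * (|w| * Real.exp (-(1/4 : ℝ) * w ^ 2)) = _
  rw [show -(1/4 : ℝ) * w ^ 2 = -w ^ 2 / 4 by ring]
  ring

lemma bs_integrableOn_of_le {f : ℝ → ℝ} {S : Set ℝ} (hf : Continuous f)
    (c₁ c₂ : ℝ) (h : ∀ w, |f w| ≤ (c₁ + c₂ * |w|) * Real.exp (-w ^ 2 / 4)) :
    IntegrableOn f S :=
  ((bs_integrable_bound c₁ c₂).restrict (s := S)).mono'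
    hf.aestronglyMeasurable.restrict
    (ae_of_all _ fun w => by simpa [Real.norm_eq_abs] using h w)

lemma bsGauss_tendsto_atBot : Filter.Tendsto bsGauss Filter.atBot (nhds 0) := by
  have h1 : Filter.Tendsto (fun w : ℝ => w ^ 2) Filter.atBot Filter.atTop := by
    have := (Filter.tendsto_pow_atTop (n := 2) (by norm_num)).comp
      (Filter.tendsto_abs_atBot_atTop (G := ℝ))
    exact this.congr fun w => by simp [Function.comp, sq_abs]
  have h2 : Filter.Tendsto (fun w : ℝ => -w ^ 2 / 2) Filter.atBot Filter.atBot := by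
    apply Filter.Tendsto.atBot_div_const (by norm_num : (0:ℝ) < 2)
    exact Filter.tendsto_neg_atBot_iff.2 h1
  exact Real.tendsto_exp_atBot.comp h2

attribute [fun_prop] continuous_bsGauss continuous_bsN

lemma bs_mul_le {a b A B : ℝ} (h1 : |a| ≤ A) (h2 : |b| ≤ B) : |a * b| ≤ A * B := by
  rw [abs_mul]
  exact mul_le_mul h1 h2 (abs_nonneg b) ((abs_nonneg a).trans h1)

lemma bsK_nonneg (ρ s z b : ℝ) : 0 ≤ bsK ρ s z b :=
  mul_nonneg (bsGauss_pos z).le (bsN_nonneg _)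

lemma bsK_le (ρ s z b : ℝ) : bsK ρ s z b ≤ bsC * bsGauss z := by
  rw [bsK, mul_comm bsC (bsGauss z)]
  exact mul_le_mul_of_nonneg_left (bsN_le _) (bsGauss_pos z).le

section Main

variable {ρ s : ℝ} (hρ : ρ ^ 2 < 1) (hs : s = Real.sqrt (1 - ρ ^ 2))

include hρ hs

lemma hasDerivAt_bsQ_comp {A B A' B' : ℝ → ℝ} {τ₀ ε : ℝ} (hε : 0 < ε)
    (hA : ∀ t ∈ Metric.ball τ₀ ε, HasDerivAt A (A' t) t)
    (hB : ∀ t ∈ Metric.ball τ₀ ε, HasDerivAt B (B' t) t)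
    (hAc : ContinuousOn A (Metric.closedBall τ₀ (ε/2)))
    (hA'c : ContinuousOn A' (Metric.closedBall τ₀ (ε/2)))
    (hB'c : ContinuousOn B' (Metric.closedBall τ₀ (ε/2))) :
    HasDerivAt (fun t => bsQ ρ s (A t) (B t))
      (bsK ρ s (A τ₀) (B τ₀) * A' τ₀ + bsQy ρ s (A τ₀) (B τ₀) * B' τ₀) τ₀ := by
  have hspos : 0 < s := bs_s_pos hρ hs
  obtain ⟨MA, hMA⟩ := (isCompact_closedBall τ₀ (ε/2)).exists_bound_of_continuousOn hAc
  obtain ⟨CA, hCA⟩ := (isCompact_closedBall τ₀ (ε/2)).exists_bound_of_continuousOn hA'c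
  obtain ⟨CB, hCB⟩ := (isCompact_closedBall τ₀ (ε/2)).exists_bound_of_continuousOn hB'c
  have hτ₀cb : τ₀ ∈ Metric.closedBall τ₀ (ε/2) := Metric.mem_closedBall_self (by linarith)
  have hMA0 : 0 ≤ MA := le_trans (norm_nonneg _) (hMA τ₀ hτ₀cb)
  have hCA0 : 0 ≤ CA := le_trans (norm_nonneg _) (hCA τ₀ hτ₀cb)
  have hCB0 : 0 ≤ CB := le_trans (norm_nonneg _) (hCB τ₀ hτ₀cb)
  have hball : Metric.ball τ₀ (ε/2) ⊆ Metric.closedBall τ₀ (ε/2) := Metric.ball_subset_closedBall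
  have hball2 : Metric.ball τ₀ (ε/2) ⊆ Metric.ball τ₀ ε := Metric.ball_subset_ball (by linarith)
  set E : ℝ := Real.exp (MA ^ 2 / 2) with hE
  have hE0 : 0 < E := Real.exp_pos _
  set F' : ℝ → ℝ → ℝ := fun t w =>
    -(A t + w) * bsGauss (A t + w) * A' t * bsN ((B t - ρ * (A t + w)) / s) +
      bsGauss (A t + w) * (bsGauss ((B t - ρ * (A t + w)) / s) * ((B' t - ρ * A' t) / s))
    with hF'
  -- derivative in t
  have hdiff : ∀ w : ℝ, ∀ t ∈ Metric.ball τ₀ (ε/2),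
      HasDerivAt (fun t => bsK ρ s (A t + w) (B t)) (F' t w) t := by
    intro w t ht
    have h1 : HasDerivAt (fun t => A t + w) (A' t) t := (hA t (hball2 ht)).add_const w
    have hg : HasDerivAt (fun t => bsGauss (A t + w))
        (-(A t + w) * bsGauss (A t + w) * A' t) t :=
      by have := (hasDerivAt_bsGauss (A t + w)).comp t h1; exact this
    have hinner : HasDerivAt (fun t => (B t - ρ * (A t + w)) / s) ((B' t - ρ * A' t) / s) t :=
      ((hB t (hball2 ht)).sub (h1.const_mul ρ)).div_const s
    have hn : HasDerivAt (fun t => bsN ((B t - ρ * (A t + w)) / s))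
        (bsGauss ((B t - ρ * (A t + w)) / s) * ((B' t - ρ * A' t) / s)) t :=
      (hasDerivAt_bsN _).comp t hinner
    exact hg.mul hn
  -- uniform bound
  set c₁ : ℝ := (CA * MA * bsC + (CB + |ρ| * CA) / s) * E with hc₁
  set c₂ : ℝ := CA * bsC * E with hc₂
  have habs : ∀ t ∈ Metric.ball τ₀ (ε/2), ∀ w : ℝ,
      |F' t w| ≤ (c₁ + c₂ * |w|) * Real.exp (-w ^ 2 / 4) := by
    intro t ht w
    have hAt : |A t| ≤ MA := by simpa [Real.norm_eq_abs] using hMA t (hball ht)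
    have hA't : |A' t| ≤ CA := by simpa [Real.norm_eq_abs] using hCA t (hball ht)
    have hB't : |B' t| ≤ CB := by simpa [Real.norm_eq_abs] using hCB t (hball ht)
    set e : ℝ := Real.exp (-w ^ 2 / 4) with he
    have he0 : 0 < e := Real.exp_pos _
    have hG : |bsGauss (A t + w)| ≤ E * e := by
      rw [abs_of_pos (bsGauss_pos _)]; exact bsGauss_add_le hAt w
    have hz : |(-(A t + w))| ≤ MA + |w| := by
      rw [abs_neg]
      exact (abs_add_le _ _).trans (by linarith)
    have hN : |bsN ((B t - ρ * (A t + w)) / s)| ≤ bsC := by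
      rw [abs_of_nonneg (bsN_nonneg _)]; exact bsN_le _
    have hG2 : |bsGauss ((B t - ρ * (A t + w)) / s)| ≤ 1 := by
      rw [abs_of_pos (bsGauss_pos _)]; exact bsGauss_le_one _
    have hBA : |(B' t - ρ * A' t) / s| ≤ (CB + |ρ| * CA) / s := by
      rw [abs_div, abs_of_pos hspos]
      rw [div_le_div_iff_of_pos_right hspos]
      calc |B' t - ρ * A' t| ≤ |B' t| + |ρ * A' t| := abs_sub _ _
        _ ≤ CB + |ρ| * CA := by
          rw [abs_mul]
          have := mul_le_mul_of_nonneg_left hA't (abs_nonneg ρ)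
          linarith
    calc |F' t w| ≤ |(-(A t + w)) * bsGauss (A t + w) * A' t *
          bsN ((B t - ρ * (A t + w)) / s)| +
          |bsGauss (A t + w) * (bsGauss ((B t - ρ * (A t + w)) / s) *
            ((B' t - ρ * A' t) / s))| := abs_add_le _ _
      _ ≤ (MA + |w|) * (E * e) * CA * bsC + (E * e) * (1 * ((CB + |ρ| * CA) / s)) := by
          exact add_le_add (bs_mul_le (bs_mul_le (bs_mul_le hz hG) hA't) hN)
            (bs_mul_le hG (bs_mul_le hG2 hBA))
      _ = (c₁ + c₂ * |w|) * e := by rw [hc₁, hc₂]; ring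
  -- apply dominated convergence
  have main := hasDerivAt_integral_of_dominated_loc_of_deriv_le
    (F := fun t w => bsK ρ s (A t + w) (B t)) (F' := F') (x₀ := τ₀)
    (μ := volume.restrict (Set.Iio (0:ℝ)))
    (bound := fun w => (c₁ + c₂ * |w|) * Real.exp (-w ^ 2 / 4))
    (Metric.ball_mem_nhds τ₀ (show (0:ℝ) < ε/2 by linarith))
    (Filter.Eventually.of_forall fun t =>
      (Continuous.aestronglyMeasurable (by unfold bsK; fun_prop)).restrict)
    (by
      apply bs_integrableOn_of_le (by unfold bsK; fun_prop) (bsC * E) 0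
      intro w
      rw [abs_of_nonneg (bsK_nonneg _ _ _ _)]
      calc bsK ρ s (A τ₀ + w) (B τ₀) ≤ bsC * bsGauss (A τ₀ + w) := bsK_le _ _ _ _
        _ ≤ bsC * (E * Real.exp (-w ^ 2 / 4)) := by
            apply mul_le_mul_of_nonneg_left _ bsC_nonneg
            exact bsGauss_add_le (by simpa [Real.norm_eq_abs] using hMA τ₀ hτ₀cb) w
        _ = (bsC * E + 0 * |w|) * Real.exp (-w ^ 2 / 4) := by ring)
    ((Continuous.aestronglyMeasurable (by rw [hF']; fun_prop)).restrict)
    (ae_of_all _ fun w t ht => by rw [Real.norm_eq_abs]; exact habs t ht w)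
    ((bs_integrable_bound c₁ c₂).restrict)
    (ae_of_all _ fun w t ht => hdiff w t ht)
  -- rewrite the function
  have hQrw : ∀ t, bsQ ρ s (A t) (B t) = ∫ w in Set.Iio (0:ℝ), bsK ρ s (A t + w) (B t) :=
    fun t => by rw [bsQ, integral_Iio_translate]
  refine HasDerivAt.congr_of_eventuallyEq ?_ (Filter.Eventually.of_forall hQrw)
  -- now compute the integral of F' τ₀
  convert main.2 using 1
  obtain ⟨a₀, ha₀⟩ : ∃ a₀, A τ₀ = a₀ := ⟨_, rfl⟩
  obtain ⟨b₀, hb₀⟩ : ∃ b₀, B τ₀ = b₀ := ⟨_, rfl⟩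
  obtain ⟨α, hα⟩ : ∃ α, A' τ₀ = α := ⟨_, rfl⟩
  obtain ⟨β, hβ⟩ : ∃ β, B' τ₀ = β := ⟨_, rfl⟩
  rw [ha₀, hb₀, hα, hβ]
  have hAt : |a₀| ≤ MA := by
    rw [← ha₀]
    simpa [Real.norm_eq_abs] using hMA τ₀ hτ₀cb
  set g1 : ℝ → ℝ := fun w => -(a₀ + w) * bsGauss (a₀ + w) * bsN ((b₀ - ρ * (a₀ + w)) / s) +
    bsGauss (a₀ + w) * (bsGauss ((b₀ - ρ * (a₀ + w)) / s) * (-ρ / s)) with hg1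
  set g2 : ℝ → ℝ := fun w => bsGauss (a₀ + w) * bsGauss ((b₀ - ρ * (a₀ + w)) / s) * (1 / s)
    with hg2
  have hsplit : ∀ w, F' τ₀ w = α * g1 w + β * g2 w := by
    intro w
    simp only [hF', hg1, hg2, ha₀, hb₀, hα, hβ]
    ring
  have hg1int : IntegrableOn g1 (Set.Iic (0:ℝ)) := by
    apply bs_integrableOn_of_le (by rw [hg1]; fun_prop) ((bsC * MA + |ρ| / s) * E) (bsC * E)
    intro w
    set e : ℝ := Real.exp (-w ^ 2 / 4) with he
    have hG : |bsGauss (a₀ + w)| ≤ E * e := by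
      rw [abs_of_pos (bsGauss_pos _)]; exact bsGauss_add_le hAt w
    have hz : |(-(a₀ + w))| ≤ MA + |w| := by
      rw [abs_neg]; exact (abs_add_le _ _).trans (by linarith [abs_le.1 hAt])
    have hN : |bsN ((b₀ - ρ * (a₀ + w)) / s)| ≤ bsC := by
      rw [abs_of_nonneg (bsN_nonneg _)]; exact bsN_le _
    have hG2 : |bsGauss ((b₀ - ρ * (a₀ + w)) / s)| ≤ 1 := by
      rw [abs_of_pos (bsGauss_pos _)]; exact bsGauss_le_one _
    have hρs : |(-ρ / s)| ≤ |ρ| / s := by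
      rw [abs_div, abs_neg, abs_of_pos hspos]
    calc |g1 w| ≤ |(-(a₀ + w)) * bsGauss (a₀ + w) * bsN ((b₀ - ρ * (a₀ + w)) / s)| +
          |bsGauss (a₀ + w) * (bsGauss ((b₀ - ρ * (a₀ + w)) / s) * (-ρ / s))| := abs_add_le _ _
      _ ≤ (MA + |w|) * (E * e) * bsC + (E * e) * (1 * (|ρ| / s)) :=
          add_le_add (bs_mul_le (bs_mul_le hz hG) hN) (bs_mul_le hG (bs_mul_le hG2 hρs))
      _ = ((bsC * MA + |ρ| / s) * E + bsC * E * |w|) * e := by ring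
  have hg2int : IntegrableOn g2 (Set.Iic (0:ℝ)) := by
    apply bs_integrableOn_of_le (by rw [hg2]; fun_prop) (E / s) 0
    intro w
    set e : ℝ := Real.exp (-w ^ 2 / 4) with he
    have hG : |bsGauss (a₀ + w)| ≤ E * e := by
      rw [abs_of_pos (bsGauss_pos _)]; exact bsGauss_add_le hAt w
    have hG2 : |bsGauss ((b₀ - ρ * (a₀ + w)) / s)| ≤ 1 := by
      rw [abs_of_pos (bsGauss_pos _)]; exact bsGauss_le_one _
    have hss : |(1:ℝ) / s| ≤ 1 / s := le_of_eq (by rw [abs_div, abs_one, abs_of_pos hspos])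
    calc |g2 w| ≤ (E * e) * 1 * (1 / s) :=
          bs_mul_le (bs_mul_le hG hG2) hss
      _ = (E / s + 0 * |w|) * e := by ring
  -- integral of g1 via improper FTC
  have hg1eval : ∫ w in Set.Iio (0:ℝ), g1 w = bsK ρ s a₀ b₀ := by
    have hKd : ∀ w ∈ Set.Iic (0:ℝ), HasDerivAt (fun w => bsK ρ s (a₀ + w) b₀) (g1 w) w := by
      intro w _
      have h1 : HasDerivAt (fun w : ℝ => a₀ + w) 1 w := (hasDerivAt_id w).const_add a₀
      have hg : HasDerivAt (fun w => bsGauss (a₀ + w))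
          (-(a₀ + w) * bsGauss (a₀ + w) * 1) w :=
        by have := (hasDerivAt_bsGauss (a₀ + w)).comp w h1; exact this
      have hinner : HasDerivAt (fun w => (b₀ - ρ * (a₀ + w)) / s) ((0 - ρ * 1) / s) w :=
        ((hasDerivAt_const w b₀).sub (h1.const_mul ρ)).div_const s
      have hn : HasDerivAt (fun w => bsN ((b₀ - ρ * (a₀ + w)) / s))
          (bsGauss ((b₀ - ρ * (a₀ + w)) / s) * ((0 - ρ * 1) / s)) w :=
        (hasDerivAt_bsN _).comp w hinner
      exact (hg.mul hn).congr_deriv (by simp only [hg1]; ring)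
    have htend : Filter.Tendsto (fun w => bsK ρ s (a₀ + w) b₀) Filter.atBot (nhds 0) := by
      apply squeeze_zero (fun w => bsK_nonneg _ _ _ _) (fun w => bsK_le _ _ _ _)
      have h1 : Filter.Tendsto (fun w : ℝ => a₀ + w) Filter.atBot Filter.atBot :=
        Filter.tendsto_atBot_add_const_left _ a₀ Filter.tendsto_id
      have := (bsGauss_tendsto_atBot.comp h1).const_mul bsC
      simpa using this
    have := integral_Iic_of_hasDerivAt_of_tendsto' hKd hg1int htend
    rw [setIntegral_congr_set Iio_ae_eq_Iic, this]
    simp [bsK]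
  -- integral of g2 via substitution
  have hg2eval : ∫ w in Set.Iio (0:ℝ), g2 w = bsQy ρ s a₀ b₀ := by
    have h1 : ∫ w in Set.Iio (0:ℝ), g2 w =
        (∫ w in Set.Iio (0:ℝ), bsGauss (a₀ + w) * bsGauss ((b₀ - ρ * (a₀ + w)) / s)) * (1 / s) := by
      rw [hg2, ← integral_mul_const]
    rw [h1, ← integral_Iio_translate a₀ (fun ξ => bsGauss ξ * bsGauss ((b₀ - ρ * ξ) / s)),
      integral_Iio_gaussmul hρ hs, bsQy]
    field_simp
  -- combine
  rw [← hg1eval, ← hg2eval, ← integral_mul_const, ← integral_mul_const, ← integral_add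
    ((hg1int.mono_set Set.Iio_subset_Iic_self).mul_const α)
    ((hg2int.mono_set Set.Iio_subset_Iic_self).mul_const β)]
  apply setIntegral_congr_fun measurableSet_Iio
  intro w _
  rw [hsplit w]
  ring


lemma hasDerivAt_bsK_fst (b a : ℝ) :
    HasDerivAt (fun a => bsK ρ s a b)
      (-a * bsK ρ s a b - ρ * bsQxy ρ s a b) a := by
  have hinner : HasDerivAt (fun a => (b - ρ * a) / s) ((0 - ρ * 1) / s) a :=
    ((hasDerivAt_const a b).sub ((hasDerivAt_id a).const_mul ρ)).div_const s
  have hn : HasDerivAt (fun a => bsN ((b - ρ * a) / s))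
      (bsGauss ((b - ρ * a) / s) * ((0 - ρ * 1) / s)) a :=
    (hasDerivAt_bsN _).comp a hinner
  refine ((hasDerivAt_bsGauss a).mul hn).congr_deriv ?_
  rw [bsK, bsQxy, ← bsKswap hρ hs a b]
  ring

lemma hasDerivAt_bsQy_snd (a b : ℝ) :
    HasDerivAt (fun b => bsQy ρ s a b)
      (-b * bsQy ρ s a b - ρ * bsQxy ρ s a b) b := by
  have hinner : HasDerivAt (fun b => (a - ρ * b) / s) ((0 - ρ * 1) / s) b :=
    ((hasDerivAt_const b a).sub ((hasDerivAt_id b).const_mul ρ)).div_const s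
  have hn : HasDerivAt (fun b => bsN ((a - ρ * b) / s))
      (bsGauss ((a - ρ * b) / s) * ((0 - ρ * 1) / s)) b :=
    (hasDerivAt_bsN _).comp b hinner
  refine ((hasDerivAt_bsGauss b).mul hn).congr_deriv ?_
  rw [bsQy, bsQxy]
  ring

lemma hasDerivAt_bsQy_fst (b a : ℝ) :
    HasDerivAt (fun a => bsQy ρ s a b) (bsQxy ρ s a b) a := by
  have hinner : HasDerivAt (fun a => (a - ρ * b) / s) ((1 - 0) / s) a :=
    ((hasDerivAt_id a).sub (hasDerivAt_const a (ρ * b))).div_const s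
  have hn : HasDerivAt (fun a => bsN ((a - ρ * b) / s))
      (bsGauss ((a - ρ * b) / s) * ((1 - 0) / s)) a :=
    (hasDerivAt_bsN _).comp a hinner
  refine (hn.const_mul (bsGauss b)).congr_deriv ?_
  rw [bsQxy]
  ring

lemma bsB_eq (a b : ℝ) :
    (1 / (2 * Real.pi * Real.sqrt (1 - ρ ^ 2))) *
      ∫ ξ₁ in Set.Iio a, ∫ ξ₂ in Set.Iio b,
        Real.exp (-(ξ₁ ^ 2 - 2 * ρ * ξ₁ * ξ₂ + ξ₂ ^ 2) / (2 * (1 - ρ ^ 2))) =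
      (1 / (2 * Real.pi)) * bsQ ρ s a b := by
  have hspos : 0 < s := bs_s_pos hρ hs
  have hinner : ∀ ξ₁ : ℝ,
      (∫ ξ₂ in Set.Iio b, Real.exp (-(ξ₁ ^ 2 - 2 * ρ * ξ₁ * ξ₂ + ξ₂ ^ 2) / (2 * (1 - ρ ^ 2))))
        = s * bsK ρ s ξ₁ b := by
    intro ξ₁
    have h1 : ∀ ξ₂ : ℝ, Real.exp (-(ξ₁ ^ 2 - 2 * ρ * ξ₁ * ξ₂ + ξ₂ ^ 2) / (2 * (1 - ρ ^ 2)))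
        = bsGauss ξ₁ * bsGauss ((ξ₂ - ρ * ξ₁) / s) := fun ξ₂ => bsE_eq hρ hs ξ₁ ξ₂
    simp only [h1]
    rw [integral_const_mul, integral_Iio_bsGauss_affine hspos (ρ * ξ₁) b, bsK]
    ring
  simp only [hinner]
  rw [integral_const_mul, ← hs, bsQ]
  have h2π : (2:ℝ) * Real.pi ≠ 0 := by positivity
  field_simp

end Main

set_option maxHeartbeats 2000000 in
/-- The closed-form two-asset cash-or-nothing option price satisfies the
transformed two-asset Black-Scholes equation. -/
theorem cash_or_nothing_solves_transformed_blackScholes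
    (σ₁ σ₂ r c S₁ S₂ ρ : ℝ)
    (hσ₁ : 0 < σ₁) (hσ₂ : 0 < σ₂) (hS₁ : 0 < S₁) (hS₂ : 0 < S₂)
    (hρ₁ : -1 < ρ) (hρ₂ : ρ < 1)
    (B : ℝ → ℝ → ℝ)
    (hB : ∀ dx dy : ℝ, B dx dy =
      (1 / (2 * Real.pi * Real.sqrt (1 - ρ ^ 2))) *
        ∫ ξ₁ in Set.Iio dx, ∫ ξ₂ in Set.Iio dy,
          Real.exp (-(ξ₁ ^ 2 - 2 * ρ * ξ₁ * ξ₂ + ξ₂ ^ 2) / (2 * (1 - ρ ^ 2))))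
    (dX : ℝ → ℝ → ℝ)
    (hdX : ∀ x τ : ℝ, dX x τ =
      (Real.log (x / S₁) + (r - σ₁ ^ 2 / 2) * τ) / (σ₁ * Real.sqrt τ))
    (dY : ℝ → ℝ → ℝ)
    (hdY : ∀ y τ : ℝ, dY y τ =
      (Real.log (y / S₂) + (r - σ₂ ^ 2 / 2) * τ) / (σ₂ * Real.sqrt τ))
    (u : ℝ → ℝ → ℝ → ℝ)
    (hu : ∀ x y τ : ℝ, u x y τ = c * Real.exp (-r * τ) * B (dX x τ) (dY y τ)) :
    ∀ x y τ : ℝ, 0 < x → 0 < y → 0 < τ →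
      deriv (fun s => u x y s) τ
        - (1 / 2) * σ₁ ^ 2 * x ^ 2 * deriv (fun a => deriv (fun b => u b y τ) a) x
        - (1 / 2) * σ₂ ^ 2 * y ^ 2 * deriv (fun a => deriv (fun b => u x b τ) a) y
        - ρ * σ₁ * σ₂ * x * y * deriv (fun a => deriv (fun b => u a b τ) y) x
        - r * x * deriv (fun a => u a y τ) x
        - r * y * deriv (fun b => u x b τ) y
        + r * u x y τ = 0 := by
  intro x y τ hx hy hτ
  have hρsq : ρ ^ 2 < 1 := by nlinarith
  obtain ⟨sc, hsc⟩ : ∃ sc : ℝ, sc = Real.sqrt (1 - ρ ^ 2) := ⟨_, rfl⟩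
  have hτ0 : Real.sqrt τ ≠ 0 := (Real.sqrt_pos.2 hτ).ne'
  -- the reduced price function
  have hu' : ∀ x' y' τ' : ℝ, u x' y' τ' =
      c * Real.exp (-r * τ') * ((1 / (2 * Real.pi)) * bsQ ρ sc (dX x' τ') (dY y' τ')) := by
    intro x' y' τ'
    rw [hu, hB, bsB_eq hρsq hsc]
  -- positivity helpers
  have hposb : ∀ t : ℝ, 0 < t → ∀ t' ∈ Metric.ball t t, 0 < t' := by
    intro t ht t' ht'
    rw [Metric.mem_ball, Real.dist_eq, abs_lt] at ht'
    linarith [ht'.1]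
  have hposc : ∀ t : ℝ, 0 < t → ∀ t' ∈ Metric.closedBall t (t/2), 0 < t' := by
    intro t ht t' ht'
    rw [Metric.mem_closedBall, Real.dist_eq, abs_le] at ht'
    linarith [ht'.1]
  -- derivative of dX in its first slot
  have hdXx : ∀ t : ℝ, 0 < t →
      HasDerivAt (fun a => dX a τ) (t⁻¹ / (σ₁ * Real.sqrt τ)) t := by
    intro t ht
    have hlog : HasDerivAt (fun a : ℝ => Real.log (a / S₁)) t⁻¹ t := by
      have h1 : HasDerivAt (fun a : ℝ => Real.log a - Real.log S₁) t⁻¹ t :=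
        (Real.hasDerivAt_log ht.ne').sub_const _
      refine h1.congr_of_eventuallyEq ?_
      filter_upwards [Ioi_mem_nhds ht] with a ha
      rw [Real.log_div (ne_of_gt ha) hS₁.ne']
    have h2 := (hlog.add_const ((r - σ₁ ^ 2 / 2) * τ)).div_const (σ₁ * Real.sqrt τ)
    exact h2.congr_of_eventuallyEq (Filter.Eventually.of_forall fun a => hdX a τ)
  have hdYy : ∀ t : ℝ, 0 < t →
      HasDerivAt (fun b => dY b τ) (t⁻¹ / (σ₂ * Real.sqrt τ)) t := by
    intro t ht
    have hlog : HasDerivAt (fun a : ℝ => Real.log (a / S₂)) t⁻¹ t := by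
      have h1 : HasDerivAt (fun a : ℝ => Real.log a - Real.log S₂) t⁻¹ t :=
        (Real.hasDerivAt_log ht.ne').sub_const _
      refine h1.congr_of_eventuallyEq ?_
      filter_upwards [Ioi_mem_nhds ht] with a ha
      rw [Real.log_div (ne_of_gt ha) hS₂.ne']
    have h2 := (hlog.add_const ((r - σ₂ ^ 2 / 2) * τ)).div_const (σ₂ * Real.sqrt τ)
    exact h2.congr_of_eventuallyEq (Filter.Eventually.of_forall fun a => hdY a τ)
  -- continuity of dX in its first slot, near any positive point
  have hdXxc : ∀ t : ℝ, 0 < t →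
      ContinuousOn (fun a => dX a τ) (Metric.closedBall t (t/2)) := by
    intro t ht a ha
    have ha0 : 0 < a := hposc t ht a ha
    apply ContinuousAt.continuousWithinAt
    have : ContinuousAt (fun a : ℝ => (Real.log (a / S₁) + (r - σ₁ ^ 2 / 2) * τ) /
        (σ₁ * Real.sqrt τ)) a := by
      apply ContinuousAt.div_const
      apply ContinuousAt.add _ continuousAt_const
      exact (Real.continuousAt_log (by positivity)).comp (continuousAt_id.div_const S₁)
    exact this.congr (by
      filter_upwards with a'
      rw [hdX])
  have hdYyc : ∀ t : ℝ, 0 < t →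
      ContinuousOn (fun b => dY b τ) (Metric.closedBall t (t/2)) := by
    intro t ht a ha
    have ha0 : 0 < a := hposc t ht a ha
    apply ContinuousAt.continuousWithinAt
    have : ContinuousAt (fun a : ℝ => (Real.log (a / S₂) + (r - σ₂ ^ 2 / 2) * τ) /
        (σ₂ * Real.sqrt τ)) a := by
      apply ContinuousAt.div_const
      apply ContinuousAt.add _ continuousAt_const
      exact (Real.continuousAt_log (by positivity)).comp (continuousAt_id.div_const S₂)
    exact this.congr (by
      filter_upwards with a'
      rw [hdY])
  have hinvc : ∀ (m t : ℝ), 0 < t →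
      ContinuousOn (fun a : ℝ => a⁻¹ / m) (Metric.closedBall t (t/2)) := by
    intro m t ht a ha
    exact (((continuousAt_id (x := a)).inv₀ (hposc t ht a ha).ne').div_const m).continuousWithinAt
  -- the x-derivative of u, at every positive point
  have hux : ∀ t : ℝ, 0 < t → HasDerivAt (fun a => u a y τ)
      (c * Real.exp (-r * τ) * (1 / (2 * Real.pi)) *
        (bsK ρ sc (dX t τ) (dY y τ) * (t⁻¹ / (σ₁ * Real.sqrt τ)))) t := by
    intro t ht
    have hQ := hasDerivAt_bsQ_comp hρsq hsc (τ₀ := t) (ε := t) ht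
      (A := fun a => dX a τ) (B := fun _ => dY y τ)
      (A' := fun t' => t'⁻¹ / (σ₁ * Real.sqrt τ)) (B' := fun _ => (0:ℝ))
      (fun t' ht' => hdXx t' (hposb t ht t' ht'))
      (fun t' _ => hasDerivAt_const t' _)
      (hdXxc t ht) (hinvc _ t ht) continuousOn_const
    have h2 := hQ.const_mul (c * Real.exp (-r * τ) * (1 / (2 * Real.pi)))
    refine (h2.congr_of_eventuallyEq (Filter.Eventually.of_forall fun a => ?_)).congr_deriv
      (by ring)
    rw [hu']
    ring
  -- the y-derivative of u, at every positive point, from every positive first argument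
  have huy : ∀ a t : ℝ, 0 < a → 0 < t → HasDerivAt (fun b => u a b τ)
      (c * Real.exp (-r * τ) * (1 / (2 * Real.pi)) *
        (bsQy ρ sc (dX a τ) (dY t τ) * (t⁻¹ / (σ₂ * Real.sqrt τ)))) t := by
    intro a t ha ht
    have hQ := hasDerivAt_bsQ_comp hρsq hsc (τ₀ := t) (ε := t) ht
      (A := fun _ => dX a τ) (B := fun b => dY b τ)
      (A' := fun _ => (0:ℝ)) (B' := fun t' => t'⁻¹ / (σ₂ * Real.sqrt τ))
      (fun t' _ => hasDerivAt_const t' _)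
      (fun t' ht' => hdYy t' (hposb t ht t' ht'))
      continuousOn_const continuousOn_const (hinvc _ t ht)
    have h2 := hQ.const_mul (c * Real.exp (-r * τ) * (1 / (2 * Real.pi)))
    refine (h2.congr_of_eventuallyEq (Filter.Eventually.of_forall fun b => ?_)).congr_deriv
      (by ring)
    rw [hu']
    ring
  -- the τ-derivative of dX and dY
  have hdXτ : ∀ t : ℝ, 0 < t → HasDerivAt (fun t' => dX x t')
      ((r - σ₁ ^ 2 / 2) * (σ₁ * Real.sqrt t)⁻¹ +
        (Real.log (x / S₁) + (r - σ₁ ^ 2 / 2) * t) *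
          (-(σ₁ * (1 / (2 * Real.sqrt t))) / (σ₁ * Real.sqrt t) ^ 2)) t := by
    intro t ht
    have hsqt : Real.sqrt t ≠ 0 := (Real.sqrt_pos.2 ht).ne'
    have hnum : HasDerivAt (fun t' : ℝ => Real.log (x / S₁) + (r - σ₁ ^ 2 / 2) * t')
        (r - σ₁ ^ 2 / 2) t := by
      simpa using ((hasDerivAt_id t).const_mul (r - σ₁ ^ 2 / 2)).const_add (Real.log (x / S₁))
    have hden : HasDerivAt (fun t' => σ₁ * Real.sqrt t') (σ₁ * (1 / (2 * Real.sqrt t))) t :=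
      (Real.hasDerivAt_sqrt ht.ne').const_mul σ₁
    have hinv := hden.inv (by positivity)
    have h2 := hnum.mul hinv
    refine h2.congr_of_eventuallyEq (Filter.Eventually.of_forall fun t' => ?_)
    simp only [hdX, div_eq_mul_inv]
    rfl
  have hdYτ : ∀ t : ℝ, 0 < t → HasDerivAt (fun t' => dY y t')
      ((r - σ₂ ^ 2 / 2) * (σ₂ * Real.sqrt t)⁻¹ +
        (Real.log (y / S₂) + (r - σ₂ ^ 2 / 2) * t) *
          (-(σ₂ * (1 / (2 * Real.sqrt t))) / (σ₂ * Real.sqrt t) ^ 2)) t := by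
    intro t ht
    have hsqt : Real.sqrt t ≠ 0 := (Real.sqrt_pos.2 ht).ne'
    have hnum : HasDerivAt (fun t' : ℝ => Real.log (y / S₂) + (r - σ₂ ^ 2 / 2) * t')
        (r - σ₂ ^ 2 / 2) t := by
      simpa using ((hasDerivAt_id t).const_mul (r - σ₂ ^ 2 / 2)).const_add (Real.log (y / S₂))
    have hden : HasDerivAt (fun t' => σ₂ * Real.sqrt t') (σ₂ * (1 / (2 * Real.sqrt t))) t :=
      (Real.hasDerivAt_sqrt ht.ne').const_mul σ₂
    have hinv := hden.inv (by positivity)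
    have h2 := hnum.mul hinv
    refine h2.congr_of_eventuallyEq (Filter.Eventually.of_forall fun t' => ?_)
    simp only [hdY, div_eq_mul_inv]
    rfl
  -- continuity of dX x · and its derivative on the closed ball around τ
  have hdXτc : ContinuousOn (fun t => dX x t) (Metric.closedBall τ (τ/2)) := by
    intro t ht
    have ht0 : 0 < t := hposc τ hτ t ht
    apply ContinuousAt.continuousWithinAt
    have : ContinuousAt (fun t : ℝ => (Real.log (x / S₁) + (r - σ₁ ^ 2 / 2) * t) /
        (σ₁ * Real.sqrt t)) t := by
      apply ContinuousAt.div
      · exact continuousAt_const.add (continuousAt_id.const_mul _)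
      · exact continuousAt_const.mul Real.continuous_sqrt.continuousAt
      · positivity
    exact this.congr (by
      filter_upwards with t'
      rw [hdX])
  have hdYτc : ContinuousOn (fun t => dY y t) (Metric.closedBall τ (τ/2)) := by
    intro t ht
    have ht0 : 0 < t := hposc τ hτ t ht
    apply ContinuousAt.continuousWithinAt
    have : ContinuousAt (fun t : ℝ => (Real.log (y / S₂) + (r - σ₂ ^ 2 / 2) * t) /
        (σ₂ * Real.sqrt t)) t := by
      apply ContinuousAt.div
      · exact continuousAt_const.add (continuousAt_id.const_mul _)
      · exact continuousAt_const.mul Real.continuous_sqrt.continuousAt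
      · positivity
    exact this.congr (by
      filter_upwards with t'
      rw [hdY])
  have hDc : ∀ (σ L k : ℝ), 0 < σ → ContinuousOn (fun t : ℝ =>
      k * (σ * Real.sqrt t)⁻¹ + (L + k * t) *
        (-(σ * (1 / (2 * Real.sqrt t))) / (σ * Real.sqrt t) ^ 2))
      (Metric.closedBall τ (τ/2)) := by
    intro σ L k hσ t ht
    have ht0 : 0 < t := hposc τ hτ t ht
    have hsqt : 0 < Real.sqrt t := Real.sqrt_pos.2 ht0
    apply ContinuousAt.continuousWithinAt
    apply ContinuousAt.add
    · exact continuousAt_const.mul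
        ((continuousAt_const.mul Real.continuous_sqrt.continuousAt).inv₀ (mul_pos hσ hsqt).ne')
    · apply ContinuousAt.mul
      · exact continuousAt_const.add (continuousAt_id.const_mul _)
      · apply ContinuousAt.div
        · exact (continuousAt_const.div
            (continuousAt_const.mul Real.continuous_sqrt.continuousAt) (mul_pos two_pos hsqt).ne').const_mul σ |>.neg
        · exact (continuousAt_const.mul Real.continuous_sqrt.continuousAt).pow 2
        · positivity
  -- the τ-derivative of u
  have huτ : HasDerivAt (fun t => u x y t)
      (c * (-r * Real.exp (-r * τ)) * ((1 / (2 * Real.pi)) * bsQ ρ sc (dX x τ) (dY y τ)) +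
        c * Real.exp (-r * τ) * ((1 / (2 * Real.pi)) *
          (bsK ρ sc (dX x τ) (dY y τ) *
            ((r - σ₁ ^ 2 / 2) * (σ₁ * Real.sqrt τ)⁻¹ +
              (Real.log (x / S₁) + (r - σ₁ ^ 2 / 2) * τ) *
                (-(σ₁ * (1 / (2 * Real.sqrt τ))) / (σ₁ * Real.sqrt τ) ^ 2)) +
           bsQy ρ sc (dX x τ) (dY y τ) *
            ((r - σ₂ ^ 2 / 2) * (σ₂ * Real.sqrt τ)⁻¹ +
              (Real.log (y / S₂) + (r - σ₂ ^ 2 / 2) * τ) *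
                (-(σ₂ * (1 / (2 * Real.sqrt τ))) / (σ₂ * Real.sqrt τ) ^ 2))))) τ := by
    have hQ := hasDerivAt_bsQ_comp hρsq hsc (τ₀ := τ) (ε := τ) hτ
      (A := fun t => dX x t) (B := fun t => dY y t)
      (A' := fun t => (r - σ₁ ^ 2 / 2) * (σ₁ * Real.sqrt t)⁻¹ +
        (Real.log (x / S₁) + (r - σ₁ ^ 2 / 2) * t) *
          (-(σ₁ * (1 / (2 * Real.sqrt t))) / (σ₁ * Real.sqrt t) ^ 2))
      (B' := fun t => (r - σ₂ ^ 2 / 2) * (σ₂ * Real.sqrt t)⁻¹ +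
        (Real.log (y / S₂) + (r - σ₂ ^ 2 / 2) * t) *
          (-(σ₂ * (1 / (2 * Real.sqrt t))) / (σ₂ * Real.sqrt t) ^ 2))
      (fun t ht => hdXτ t (hposb τ hτ t ht))
      (fun t ht => hdYτ t (hposb τ hτ t ht))
      hdXτc (hDc σ₁ _ _ hσ₁) (hDc σ₂ _ _ hσ₂)
    have hexp : HasDerivAt (fun t => c * Real.exp (-r * t)) (c * (-r * Real.exp (-r * τ))) τ := by
      have h1 : HasDerivAt (fun t : ℝ => -r * t) (-r) τ := by
        simpa using (hasDerivAt_id τ).const_mul (-r)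
      have h2 := (Real.hasDerivAt_exp (-r * τ)).comp τ h1
      exact (h2.const_mul c).congr_deriv (by ring)
    have h3 := hexp.mul (hQ.const_mul (1 / (2 * Real.pi)))
    refine (h3.congr_of_eventuallyEq (Filter.Eventually.of_forall fun t => ?_)).congr_deriv
      (by ring)
    rw [hu']
    rfl
  -- now express all six derivatives
  have e_τ := huτ.deriv
  have e_x := (hux x hx).deriv
  have e_y := (huy x y hx hy).deriv
  have e_xx : deriv (fun a => deriv (fun b => u b y τ) a) x =
      c * Real.exp (-r * τ) * (1 / (2 * Real.pi)) *
        (((-(dX x τ) * bsK ρ sc (dX x τ) (dY y τ) - ρ * bsQxy ρ sc (dX x τ) (dY y τ)) *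
            (x⁻¹ / (σ₁ * Real.sqrt τ))) * (x⁻¹ / (σ₁ * Real.sqrt τ)) +
          bsK ρ sc (dX x τ) (dY y τ) * (-(x ^ 2)⁻¹ / (σ₁ * Real.sqrt τ))) := by
    have heq : (fun a => deriv (fun b => u b y τ) a) =ᶠ[nhds x]
        (fun a => c * Real.exp (-r * τ) * (1 / (2 * Real.pi)) *
          (bsK ρ sc (dX a τ) (dY y τ) * (a⁻¹ / (σ₁ * Real.sqrt τ)))) := by
      filter_upwards [Ioi_mem_nhds hx] with a ha
      exact (hux a ha).deriv
    rw [heq.deriv_eq]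
    have hK := (hasDerivAt_bsK_fst hρsq hsc (dY y τ) (dX x τ)).comp x (hdXx x hx)
    have hinv : HasDerivAt (fun a : ℝ => a⁻¹ / (σ₁ * Real.sqrt τ))
        (-(x ^ 2)⁻¹ / (σ₁ * Real.sqrt τ)) x := (hasDerivAt_inv hx.ne').div_const _
    exact ((hK.mul hinv).const_mul _).deriv
  have e_yy : deriv (fun a => deriv (fun b => u x b τ) a) y =
      c * Real.exp (-r * τ) * (1 / (2 * Real.pi)) *
        (((-(dY y τ) * bsQy ρ sc (dX x τ) (dY y τ) - ρ * bsQxy ρ sc (dX x τ) (dY y τ)) *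
            (y⁻¹ / (σ₂ * Real.sqrt τ))) * (y⁻¹ / (σ₂ * Real.sqrt τ)) +
          bsQy ρ sc (dX x τ) (dY y τ) * (-(y ^ 2)⁻¹ / (σ₂ * Real.sqrt τ))) := by
    have heq : (fun b => deriv (fun b' => u x b' τ) b) =ᶠ[nhds y]
        (fun b => c * Real.exp (-r * τ) * (1 / (2 * Real.pi)) *
          (bsQy ρ sc (dX x τ) (dY b τ) * (b⁻¹ / (σ₂ * Real.sqrt τ)))) := by
      filter_upwards [Ioi_mem_nhds hy] with b hb
      exact (huy x b hx hb).deriv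
    rw [heq.deriv_eq]
    have hK := (hasDerivAt_bsQy_snd hρsq hsc (dX x τ) (dY y τ)).comp y (hdYy y hy)
    have hinv : HasDerivAt (fun b : ℝ => b⁻¹ / (σ₂ * Real.sqrt τ))
        (-(y ^ 2)⁻¹ / (σ₂ * Real.sqrt τ)) y := (hasDerivAt_inv hy.ne').div_const _
    exact ((hK.mul hinv).const_mul _).deriv
  have e_xy : deriv (fun a => deriv (fun b => u a b τ) y) x =
      c * Real.exp (-r * τ) * (1 / (2 * Real.pi)) *
        (bsQxy ρ sc (dX x τ) (dY y τ) * (x⁻¹ / (σ₁ * Real.sqrt τ)) * (y⁻¹ / (σ₂ * Real.sqrt τ))) := by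
    have heq : (fun a => deriv (fun b => u a b τ) y) =ᶠ[nhds x]
        (fun a => c * Real.exp (-r * τ) * (1 / (2 * Real.pi)) *
          (bsQy ρ sc (dX a τ) (dY y τ) * (y⁻¹ / (σ₂ * Real.sqrt τ)))) := by
      filter_upwards [Ioi_mem_nhds hx] with a ha
      exact (huy a y ha hy).deriv
    rw [heq.deriv_eq]
    have hK := (hasDerivAt_bsQy_fst hρsq hsc (dY y τ) (dX x τ)).comp x (hdXx x hx)
    exact (((hK.mul_const (y⁻¹ / (σ₂ * Real.sqrt τ))).const_mul _).congr_deriv (by ring)).deriv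
  rw [e_τ, e_x, e_y, e_xx, e_yy, e_xy, hu' x y τ]
  rw [hdX x τ, hdY y τ]
  obtain ⟨q, hq⟩ : ∃ q : ℝ, Real.sqrt τ = q := ⟨_, rfl⟩
  have hq0 : 0 < q := hq ▸ Real.sqrt_pos.2 hτ
  have hτq : τ = q ^ 2 := by rw [← hq, Real.sq_sqrt hτ.le]
  rw [hq, hτq]
  have hπ : Real.pi ≠ 0 := Real.pi_ne_zero
  field_simp
  ring
end

section
/- Let σ₁ > 0, σ₂ > 0, r ∈ ℝ, c ∈ ℝ, S₁ > 0, S₂ > 0 and ρ ∈ (−1, 1), and let u(x, y, τ) = c·e^{−rτ}·B(d_x(x, τ), d_y(y, τ); ρ) be the closed-form two-asset cash-or-nothing option price, with d_x(x, τ) = (ln(x/S₁) + (r − σ₁²/2)τ)/(σ₁√τ) and d_y(y, τ) = (ln(y/S₂) + (r − σ₂²/2)τ)/(σ₂√τ). Then as τ → 0⁺: if x > S₁ and y > S₂, u(x, y, τ) tends to c; and if x < S₁ or y < S₂ (with x, y > 0), u(x, y, τ) tends to 0. That is, the closed-form solution attains the cash-or-nothing terminal payoff u_T(x, y) = c·𝟙[x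 ≥ S₁ and y ≥ S₂] at expiration, away from the strikes. -/
open MeasureTheory Filter

noncomputable def J0 (b a : ℝ) : ℝ := ∫ t in Set.Iio a, Real.exp (-b * t ^ 2)

lemma J0_nonneg (b a : ℝ) : 0 ≤ J0 b a :=
  setIntegral_nonneg measurableSet_Iio fun _ _ => (Real.exp_pos _).le

lemma J0_mono {b : ℝ} (hb : 0 < b) : Monotone (J0 b) := fun a a' h =>
  setIntegral_mono_set (integrable_exp_neg_mul_sq hb).integrableOn
    (Filter.Eventually.of_forall fun _ => (Real.exp_pos _).le)
    (HasSubset.Subset.eventuallyLE (Set.Iio_subset_Iio h))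

lemma J0_le {b : ℝ} (hb : 0 < b) (a : ℝ) : J0 b a ≤ Real.sqrt (Real.pi / b) := by
  rw [← integral_gaussian]
  exact setIntegral_le_integral (integrable_exp_neg_mul_sq hb)
    (Filter.Eventually.of_forall fun _ => (Real.exp_pos _).le)

lemma J0_shift (b m a : ℝ) :
    (∫ t in Set.Iio a, Real.exp (-b * (t - m) ^ 2)) = J0 b (a - m) := by
  rw [J0, ← integral_indicator measurableSet_Iio, ← integral_indicator measurableSet_Iio,
    ← integral_sub_right_eq_self
      (fun t => (Set.Iio (a - m)).indicator (fun t => Real.exp (-b * t ^ 2)) t) m]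
  congr 1
  funext t
  by_cases h : t < a
  · rw [Set.indicator_of_mem (Set.mem_Iio.mpr h),
      Set.indicator_of_mem (Set.mem_Iio.mpr (by linarith))]
  · rw [Set.indicator_of_notMem (by simpa using h),
      Set.indicator_of_notMem (by simp only [Set.mem_Iio]; intro hh; exact h (by linarith))]

lemma J0_tendsto_atTop {b : ℝ} (hb : 0 < b) :
    Tendsto (J0 b) atTop (nhds (Real.sqrt (Real.pi / b))) := by
  rw [← integral_gaussian]
  have hmeas : Measurable fun t : ℝ => Real.exp (-b * t ^ 2) :=
    (((measurable_id.pow_const 2).const_mul (-b)).exp)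
  have := tendsto_integral_filter_of_dominated_convergence (μ := volume) (l := atTop)
    (F := fun a => (Set.Iio a).indicator fun t => Real.exp (-b * t ^ 2))
    (f := fun t => Real.exp (-b * t ^ 2))
    (fun t => Real.exp (-b * t ^ 2))
    (Filter.Eventually.of_forall fun a =>
      (hmeas.indicator measurableSet_Iio).aestronglyMeasurable)
    (Filter.Eventually.of_forall fun a => Filter.Eventually.of_forall fun t => by
      rw [Real.norm_eq_abs, abs_of_nonneg (Set.indicator_nonneg (fun _ _ => (Real.exp_pos _).le) t)]
      exact Set.indicator_le_self' (fun _ _ => (Real.exp_pos _).le) t)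
    (integrable_exp_neg_mul_sq hb)
    (Filter.Eventually.of_forall fun t => by
      apply Tendsto.congr' _ (tendsto_const_nhds (x := Real.exp (-b * t ^ 2)))
      filter_upwards [eventually_gt_atTop t] with a ha
      exact (Set.indicator_of_mem (Set.mem_Iio.mpr ha) (fun t => Real.exp (-b * t ^ 2))).symm)
  exact this.congr fun a => integral_indicator measurableSet_Iio

lemma J0_tendsto_atBot {b : ℝ} (hb : 0 < b) :
    Tendsto (J0 b) atBot (nhds 0) := by
  have hmeas : Measurable fun t : ℝ => Real.exp (-b * t ^ 2) :=
    (((measurable_id.pow_const 2).const_mul (-b)).exp)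
  have := tendsto_integral_filter_of_dominated_convergence (μ := volume) (l := atBot)
    (F := fun a => (Set.Iio a).indicator fun t => Real.exp (-b * t ^ 2))
    (f := fun _ => (0 : ℝ))
    (fun t => Real.exp (-b * t ^ 2))
    (Filter.Eventually.of_forall fun a =>
      (hmeas.indicator measurableSet_Iio).aestronglyMeasurable)
    (Filter.Eventually.of_forall fun a => Filter.Eventually.of_forall fun t => by
      rw [Real.norm_eq_abs, abs_of_nonneg (Set.indicator_nonneg (fun _ _ => (Real.exp_pos _).le) t)]
      exact Set.indicator_le_self' (fun _ _ => (Real.exp_pos _).le) t)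
    (integrable_exp_neg_mul_sq hb)
    (Filter.Eventually.of_forall fun t => by
      apply Tendsto.congr' _ (tendsto_const_nhds (x := (0:ℝ)))
      filter_upwards [eventually_lt_atBot t] with a ha
      exact (Set.indicator_of_notMem
        (show t ∉ Set.Iio a from fun hm => absurd (Set.mem_Iio.mp hm) ha.le.not_gt)
        (fun t => Real.exp (-b * t ^ 2))).symm)
  have h2 := this.congr fun a => integral_indicator measurableSet_Iio
  rw [integral_zero] at h2
  exact h2

lemma tendsto_d_atTop {σ L : ℝ} (k : ℝ) (hσ : 0 < σ) (hL : 0 < L) :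
    Tendsto (fun τ => (L + k * τ) / (σ * Real.sqrt τ)) (nhdsWithin 0 (Set.Ioi 0)) atTop := by
  have h1 : Tendsto (fun τ : ℝ => L + k * τ) (nhdsWithin 0 (Set.Ioi 0)) (nhds L) := by
    have hc : Continuous fun τ : ℝ => L + k * τ := by continuity
    simpa using (hc.tendsto 0).mono_left nhdsWithin_le_nhds
  have h2 : Tendsto (fun τ : ℝ => σ * Real.sqrt τ) (nhdsWithin 0 (Set.Ioi 0))
      (nhdsWithin 0 (Set.Ioi 0)) := by
    rw [tendsto_nhdsWithin_iff]
    constructor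
    · have hc : Continuous fun τ : ℝ => σ * Real.sqrt τ :=
        continuous_const.mul Real.continuous_sqrt
      simpa using (hc.tendsto 0).mono_left nhdsWithin_le_nhds
    · filter_upwards [self_mem_nhdsWithin] with τ hτ
      exact Set.mem_Ioi.mpr (mul_pos hσ (Real.sqrt_pos.mpr hτ))
  have h3 := tendsto_inv_nhdsGT_zero.comp h2
  simpa [div_eq_mul_inv, Function.comp] using Tendsto.pos_mul_atTop hL h1 h3

lemma tendsto_d_atBot {σ L : ℝ} (k : ℝ) (hσ : 0 < σ) (hL : L < 0) :
    Tendsto (fun τ => (L + k * τ) / (σ * Real.sqrt τ)) (nhdsWithin 0 (Set.Ioi 0)) atBot := by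
  have h1 : Tendsto (fun τ : ℝ => L + k * τ) (nhdsWithin 0 (Set.Ioi 0)) (nhds L) := by
    have hc : Continuous fun τ : ℝ => L + k * τ := by continuity
    simpa using (hc.tendsto 0).mono_left nhdsWithin_le_nhds
  have h2 : Tendsto (fun τ : ℝ => σ * Real.sqrt τ) (nhdsWithin 0 (Set.Ioi 0))
      (nhdsWithin 0 (Set.Ioi 0)) := by
    rw [tendsto_nhdsWithin_iff]
    constructor
    · have hc : Continuous fun τ : ℝ => σ * Real.sqrt τ :=
        continuous_const.mul Real.continuous_sqrt
      simpa using (hc.tendsto 0).mono_left nhdsWithin_le_nhds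
    · filter_upwards [self_mem_nhdsWithin] with τ hτ
      exact Set.mem_Ioi.mpr (mul_pos hσ (Real.sqrt_pos.mpr hτ))
  have h3 := tendsto_inv_nhdsGT_zero.comp h2
  simpa [div_eq_mul_inv, Function.comp] using Tendsto.neg_mul_atTop hL h1 h3

/-- At expiration (τ → 0⁺), the closed-form two-asset cash-or-nothing price
attains the cash-or-nothing payoff, away from the strikes. -/
theorem cash_or_nothing_terminal_payoff
    (σ₁ σ₂ r c S₁ S₂ ρ : ℝ)
    (hσ₁ : 0 < σ₁) (hσ₂ : 0 < σ₂) (hS₁ : 0 < S₁) (hS₂ : 0 < S₂)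
    (hρ₁ : -1 < ρ) (hρ₂ : ρ < 1)
    (B : ℝ → ℝ → ℝ)
    (hB : ∀ dx dy : ℝ, B dx dy =
      (1 / (2 * Real.pi * Real.sqrt (1 - ρ ^ 2))) *
        ∫ ξ₁ in Set.Iio dx, ∫ ξ₂ in Set.Iio dy,
          Real.exp (-(ξ₁ ^ 2 - 2 * ρ * ξ₁ * ξ₂ + ξ₂ ^ 2) / (2 * (1 - ρ ^ 2))))
    (dX : ℝ → ℝ → ℝ)
    (hdX : ∀ x τ : ℝ, dX x τ =
      (Real.log (x / S₁) + (r - σ₁ ^ 2 / 2) * τ) / (σ₁ * Real.sqrt τ))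
    (dY : ℝ → ℝ → ℝ)
    (hdY : ∀ y τ : ℝ, dY y τ =
      (Real.log (y / S₂) + (r - σ₂ ^ 2 / 2) * τ) / (σ₂ * Real.sqrt τ))
    (u : ℝ → ℝ → ℝ → ℝ)
    (hu : ∀ x y τ : ℝ, u x y τ = c * Real.exp (-r * τ) * B (dX x τ) (dY y τ)) :
    (∀ x y : ℝ, S₁ < x → S₂ < y →
      Tendsto (fun τ => u x y τ) (nhdsWithin 0 (Set.Ioi 0)) (nhds c)) ∧
    (∀ x y : ℝ, 0 < x → 0 < y → (x < S₁ ∨ y < S₂) →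
      Tendsto (fun τ => u x y τ) (nhdsWithin 0 (Set.Ioi 0)) (nhds 0)) := by
  have hs2 : 0 < 1 - ρ ^ 2 := by nlinarith
  set l := nhdsWithin (0:ℝ) (Set.Ioi 0) with hl
  set s := Real.sqrt (1 - ρ ^ 2) with hs_def
  have hs : 0 < s := Real.sqrt_pos.mpr hs2
  set b : ℝ := 1 / (2 * (1 - ρ ^ 2)) with hb_def
  have hb : 0 < b := by positivity
  set K := Real.sqrt (Real.pi / b) with hK_def
  set C := 1 / (2 * Real.pi * s) with hC_def
  set g : ℝ → ℝ := fun ξ => Real.exp (-(1/2 : ℝ) * ξ ^ 2) with hg_def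
  have hsplit : ∀ ξ₁ ξ₂ : ℝ,
      Real.exp (-(ξ₁ ^ 2 - 2 * ρ * ξ₁ * ξ₂ + ξ₂ ^ 2) / (2 * (1 - ρ ^ 2)))
        = g ξ₁ * Real.exp (-b * (ξ₂ - ρ * ξ₁) ^ 2) := by
    intro ξ₁ ξ₂
    rw [hg_def, ← Real.exp_add]
    congr 1
    rw [hb_def]
    field_simp
    ring
  have hkey : ∀ dx dy : ℝ, B dx dy = C * ∫ ξ in Set.Iio dx, g ξ * J0 b (dy - ρ * ξ) := by
    intro dx dy
    rw [hB]
    congr 1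
    refine setIntegral_congr_fun measurableSet_Iio fun ξ _ => ?_
    calc (∫ ξ₂ in Set.Iio dy, Real.exp (-(ξ ^ 2 - 2*ρ*ξ*ξ₂ + ξ₂ ^ 2)/(2*(1-ρ^2))))
        = ∫ ξ₂ in Set.Iio dy, g ξ * Real.exp (-b * (ξ₂ - ρ*ξ) ^ 2) := by
          simp only [hsplit]
      _ = g ξ * ∫ ξ₂ in Set.Iio dy, Real.exp (-b * (ξ₂ - ρ*ξ) ^ 2) :=
          integral_const_mul _ _
      _ = g ξ * J0 b (dy - ρ*ξ) := by rw [J0_shift]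
  have hgmeas : Measurable g := by
    rw [hg_def]; exact ((measurable_id.pow_const 2).const_mul (-(1/2 : ℝ))).exp
  have hJmeas : Measurable (J0 b) := (J0_mono hb).measurable
  have hFmeas : ∀ dy : ℝ, Measurable fun ξ => g ξ * J0 b (dy - ρ * ξ) := fun dy =>
    hgmeas.mul (hJmeas.comp (measurable_const.sub (measurable_id.const_mul ρ)))
  have hFle : ∀ dy ξ : ℝ, g ξ * J0 b (dy - ρ * ξ) ≤ g ξ * K := fun dy ξ =>
    mul_le_mul_of_nonneg_left (J0_le hb _) (Real.exp_pos _).le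
  have hFnonneg : ∀ dy ξ : ℝ, 0 ≤ g ξ * J0 b (dy - ρ * ξ) := fun dy ξ =>
    mul_nonneg (Real.exp_pos _).le (J0_nonneg _ _)
  have hbound_int : Integrable (fun ξ => g ξ * K) volume := by
    rw [hg_def]
    exact (integrable_exp_neg_mul_sq (by norm_num : (0:ℝ) < 1/2)).mul_const K
  have hexp1 : Tendsto (fun τ : ℝ => Real.exp (-r * τ)) l (nhds 1) := by
    have hc : Continuous fun τ : ℝ => Real.exp (-r * τ) :=
      Real.continuous_exp.comp (continuous_const.mul continuous_id)
    simpa using (hc.tendsto 0).mono_left nhdsWithin_le_nhds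
  constructor
  · intro x y hx hy
    have hDx : Tendsto (fun τ => dX x τ) l atTop := by
      simp only [hdX]
      exact tendsto_d_atTop _ hσ₁ (Real.log_pos ((one_lt_div hS₁).mpr hx))
    have hDy : Tendsto (fun τ => dY y τ) l atTop := by
      simp only [hdY]
      exact tendsto_d_atTop _ hσ₂ (Real.log_pos ((one_lt_div hS₂).mpr hy))
    have hDCT := tendsto_integral_filter_of_dominated_convergence (μ := volume) (l := l)
      (F := fun τ => (Set.Iio (dX x τ)).indicator fun ξ => g ξ * J0 b (dY y τ - ρ * ξ))
      (f := fun ξ => g ξ * K)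
      (fun ξ => g ξ * K)
      (Filter.Eventually.of_forall fun τ =>
        ((hFmeas (dY y τ)).indicator measurableSet_Iio).aestronglyMeasurable)
      (Filter.Eventually.of_forall fun τ => Filter.Eventually.of_forall fun ξ => by
        rw [Real.norm_eq_abs, abs_of_nonneg (Set.indicator_nonneg (fun ξ _ => hFnonneg _ ξ) ξ)]
        exact le_trans (Set.indicator_le_self' (fun ξ _ => hFnonneg _ ξ) ξ) (hFle _ ξ))
      hbound_int
      (Filter.Eventually.of_forall fun ξ => by
        have h2 : Tendsto (fun τ => dY y τ - ρ * ξ) l atTop := by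
          simpa [sub_eq_add_neg] using tendsto_atTop_add_const_right l (-(ρ * ξ)) hDy
        have hJ : Tendsto (fun τ => J0 b (dY y τ - ρ * ξ)) l (nhds K) :=
          (J0_tendsto_atTop hb).comp h2
        apply Tendsto.congr' _ (tendsto_const_nhds.mul hJ)
        filter_upwards [hDx.eventually (eventually_gt_atTop ξ)] with τ hτ
        exact (Set.indicator_of_mem (Set.mem_Iio.mpr hτ)
          (fun ξ => g ξ * J0 b (dY y τ - ρ * ξ))).symm)
    have hInt : Tendsto (fun τ => ∫ ξ in Set.Iio (dX x τ), g ξ * J0 b (dY y τ - ρ * ξ)) l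
        (nhds (∫ ξ, g ξ * K)) :=
      hDCT.congr fun τ => integral_indicator measurableSet_Iio
    have hval : C * ∫ ξ, g ξ * K = 1 := by
      rw [integral_mul_const]
      have e1 : (∫ ξ : ℝ, g ξ) = Real.sqrt (2 * Real.pi) := by
        rw [hg_def, integral_gaussian]
        congr 1
        ring
      have e2 : K = Real.sqrt (2 * Real.pi) * s := by
        rw [hK_def, hs_def, ← Real.sqrt_mul (by positivity)]
        congr 1
        rw [hb_def]
        field_simp
      rw [e1, e2, hC_def, show Real.sqrt (2*Real.pi) * (Real.sqrt (2*Real.pi) * s)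
          = (2*Real.pi) * s by rw [← mul_assoc, Real.mul_self_sqrt (by positivity)]]
      field_simp
    have hBt : Tendsto (fun τ => B (dX x τ) (dY y τ)) l (nhds 1) := by
      have h := hInt.const_mul C
      rw [hval] at h
      exact h.congr fun τ => (hkey _ _).symm
    simp only [hu]
    have hfin := ((tendsto_const_nhds (x := c)).mul hexp1).mul hBt
    simpa using hfin
  · intro x y hx0 hy0 hxy
    have hDCT := tendsto_integral_filter_of_dominated_convergence (μ := volume) (l := l)
      (F := fun τ => (Set.Iio (dX x τ)).indicator fun ξ => g ξ * J0 b (dY y τ - ρ * ξ))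
      (f := fun _ => (0:ℝ))
      (fun ξ => g ξ * K)
      (Filter.Eventually.of_forall fun τ =>
        ((hFmeas (dY y τ)).indicator measurableSet_Iio).aestronglyMeasurable)
      (Filter.Eventually.of_forall fun τ => Filter.Eventually.of_forall fun ξ => by
        rw [Real.norm_eq_abs, abs_of_nonneg (Set.indicator_nonneg (fun ξ _ => hFnonneg _ ξ) ξ)]
        exact le_trans (Set.indicator_le_self' (fun ξ _ => hFnonneg _ ξ) ξ) (hFle _ ξ))
      hbound_int
      (Filter.Eventually.of_forall fun ξ => by
        rcases hxy with hx | hy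
        · have hDx : Tendsto (fun τ => dX x τ) l atBot := by
            simp only [hdX]
            exact tendsto_d_atBot _ hσ₁
              (Real.log_neg (div_pos hx0 hS₁) ((div_lt_one hS₁).mpr hx))
          apply Tendsto.congr' _ (tendsto_const_nhds (x := (0:ℝ)))
          filter_upwards [hDx.eventually (eventually_lt_atBot ξ)] with τ hτ
          exact (Set.indicator_of_notMem
            (show ξ ∉ Set.Iio (dX x τ) from fun hm => absurd (Set.mem_Iio.mp hm) hτ.le.not_gt)
            (fun ξ => g ξ * J0 b (dY y τ - ρ * ξ))).symm
        · have hDy : Tendsto (fun τ => dY y τ) l atBot := by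
            simp only [hdY]
            exact tendsto_d_atBot _ hσ₂
              (Real.log_neg (div_pos hy0 hS₂) ((div_lt_one hS₂).mpr hy))
          have h2 : Tendsto (fun τ => dY y τ - ρ * ξ) l atBot := by
            simpa [sub_eq_add_neg] using tendsto_atBot_add_const_right l (-(ρ * ξ)) hDy
          have hJ : Tendsto (fun τ => J0 b (dY y τ - ρ * ξ)) l (nhds 0) :=
            (J0_tendsto_atBot hb).comp h2
          refine squeeze_zero (fun τ => Set.indicator_nonneg (fun ξ _ => hFnonneg _ ξ) ξ)
            (fun τ => Set.indicator_le_self' (fun ξ _ => hFnonneg _ ξ) ξ) ?_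
          simpa using tendsto_const_nhds.mul hJ)
    have hInt : Tendsto (fun τ => ∫ ξ in Set.Iio (dX x τ), g ξ * J0 b (dY y τ - ρ * ξ)) l
        (nhds (∫ _ : ℝ, (0:ℝ))) :=
      hDCT.congr fun τ => integral_indicator measurableSet_Iio
    rw [integral_zero] at hInt
    have hBt : Tendsto (fun τ => B (dX x τ) (dY y τ)) l (nhds 0) := by
      have h := hInt.const_mul C
      rw [mul_zero] at h
      exact h.congr fun τ => (hkey _ _).symm
    simp only [hu]
    have hfin := ((tendsto_const_nhds (x := c)).mul hexp1).mul hBt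
    simpa using hfin
end
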